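/- arXiv:2012.00609 — 2 statements merged into one kernel-verified Lean document; each statement's English description precedes it below -/
import Mathlib

section
/- Let δ, γ > 0, and let x, x̆ : [0,∞) → ℝ be functions with values in [x₁, x̄] where x₁ satisfies c_* - p x ≤ -α for x ∈ [x₁, x̄] and some α > 0. Then for h > 0 and K₀ > 0, the quantity r h + ∫₀^∞ e^{-δt}(c - p x̆(t))(K₀ + h)e^{-γt} dt - ∫₀^∞ e^{-δt}(c - p x(t)) K₀ e^{-γt} dt is at most (δ+γ)^{-1}(-hα + K₀ p x̄). In particular, if h = n K₀ with n α > p x̄, this quantity is negative. -/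
open Set MeasureTheory

lemma exp_kappa_integral {κ : ℝ} (hκ : 0 < κ) :
    (∫ t in Ioi (0:ℝ), Real.exp (-κ * t)) = κ⁻¹ := by
  have h := integral_comp_mul_left_Ioi (fun u => Real.exp (-u)) 0 hκ
  simp only [mul_zero, smul_eq_mul] at h
  rw [integral_exp_neg_Ioi_zero, mul_one] at h
  simpa [neg_mul] using h

lemma bounded_integrable {κ : ℝ} (hκ : 0 < κ) (f : ℝ → ℝ) (hm : Measurable f) (M : ℝ)
    (hM : ∀ t ∈ Ioi (0:ℝ), |f t| ≤ M) :
    IntegrableOn (fun t => f t * Real.exp (-κ * t)) (Ioi (0:ℝ)) := by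
  have hint : IntegrableOn (fun t : ℝ => M * Real.exp (-κ * t)) (Ioi (0:ℝ)) :=
    (exp_neg_integrableOn_Ioi 0 hκ).const_mul M
  refine Integrable.mono' hint ?_ ?_
  · exact ((hm.mul ((Real.measurable_exp).comp (measurable_const.mul measurable_id)))).aestronglyMeasurable
  · filter_upwards [ae_restrict_mem measurableSet_Ioi] with t ht
    have h1 := hM t ht
    have h2 : (0:ℝ) < Real.exp (-κ * t) := Real.exp_pos _
    rw [Real.norm_eq_abs, abs_mul, abs_of_pos h2]
    exact mul_le_mul_of_nonneg_right h1 h2.le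

/-- Cost-comparison estimate of Lemma 2.1: with `c_* = c + r (δ+γ)` and
`c_* - p ξ ≤ -α` on `[x₁, x̄]`, for trajectories `x, x̆` with values in `[x₁, x̄]`,
`r h + ∫₀^∞ e^{-δt}(c - p x̆ t)(K₀+h)e^{-γt} dt - ∫₀^∞ e^{-δt}(c - p x t) K₀ e^{-γt} dt
  ≤ (δ+γ)⁻¹ (-(h α) + K₀ p x̄)`; in particular if `h = n K₀` with `n α > p x̄` this
quantity is negative. -/
theorem cost_comparison (p c r δ γ α x₁ xbar K₀ h : ℝ)
    (hp : 0 ≤ p) (hc : 0 ≤ c) (hr : 0 ≤ r) (hδ : 0 < δ) (hγ : 0 < γ)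
    (hα : 0 < α) (hx₁ : 0 < x₁) (hx₁bar : x₁ < xbar)
    (hK₀ : 0 < K₀) (hh : 0 < h)
    (hcs : ∀ ξ ∈ Icc x₁ xbar, c + r * (δ + γ) - p * ξ ≤ -α)
    (x xb : ℝ → ℝ)
    (hx : ∀ t, 0 ≤ t → x t ∈ Icc x₁ xbar) (hxb : ∀ t, 0 ≤ t → xb t ∈ Icc x₁ xbar)
    (hmx : Measurable x) (hmxb : Measurable xb) :
    r * h
      + (∫ t in Ioi (0:ℝ), Real.exp (-δ * t) * (c - p * xb t) * ((K₀ + h) * Real.exp (-γ * t)))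
      - (∫ t in Ioi (0:ℝ), Real.exp (-δ * t) * (c - p * x t) * (K₀ * Real.exp (-γ * t)))
      ≤ (δ + γ)⁻¹ * (-(h * α) + K₀ * p * xbar) ∧
    ∀ n : ℝ, h = n * K₀ → p * xbar < n * α →
      r * h
        + (∫ t in Ioi (0:ℝ), Real.exp (-δ * t) * (c - p * xb t) * ((K₀ + h) * Real.exp (-γ * t)))
        - (∫ t in Ioi (0:ℝ), Real.exp (-δ * t) * (c - p * x t) * (K₀ * Real.exp (-γ * t)))
        < 0 := by
  set κ := δ + γ with hκdef
  have hκ : 0 < κ := by positivity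
  have hexp : ∀ t : ℝ, Real.exp (-δ * t) * Real.exp (-γ * t) = Real.exp (-κ * t) := by
    intro t
    rw [← Real.exp_add, hκdef]
    ring_nf
  -- bound of values
  have hbound : ∀ (f : ℝ → ℝ), (∀ t, 0 ≤ t → f t ∈ Icc x₁ xbar) →
      ∀ t ∈ Ioi (0:ℝ), |c - p * f t| ≤ c + p * xbar := by
    intro f hf t ht
    obtain ⟨h1, h2⟩ := hf t (le_of_lt ht)
    rw [abs_le]
    constructor <;> nlinarith
  -- rewrite integrals
  have hre : ∀ (f : ℝ → ℝ) (C : ℝ), (fun t => Real.exp (-δ * t) * (c - p * f t) * (C * Real.exp (-γ * t)))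
      = fun t => (C * (c - p * f t)) * Real.exp (-κ * t) := by
    intro f C
    funext t
    rw [← hexp t]; ring
  have hint1 : IntegrableOn (fun t => ((K₀ + h) * (c - p * xb t)) * Real.exp (-κ * t)) (Ioi (0:ℝ)) := by
    apply bounded_integrable hκ _ (measurable_const.mul ((measurable_const.sub (measurable_const.mul hmxb)))) ((K₀ + h) * (c + p * xbar))
    intro t ht
    show |(K₀ + h) * (c - p * xb t)| ≤ _
    rw [abs_mul, abs_of_pos (by linarith)]
    exact mul_le_mul_of_nonneg_left (hbound xb hxb t ht) (by linarith)
  have hint2 : IntegrableOn (fun t => (K₀ * (c - p * x t)) * Real.exp (-κ * t)) (Ioi (0:ℝ)) := by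
    apply bounded_integrable hκ _ (measurable_const.mul ((measurable_const.sub (measurable_const.mul hmx)))) (K₀ * (c + p * xbar))
    intro t ht
    show |K₀ * (c - p * x t)| ≤ _
    rw [abs_mul, abs_of_pos hK₀]
    exact mul_le_mul_of_nonneg_left (hbound x hx t ht) hK₀.le
  have hcexp : IntegrableOn (fun t : ℝ => Real.exp (-κ * t)) (Ioi (0:ℝ)) :=
    exp_neg_integrableOn_Ioi 0 hκ
  -- upper bound for first integral
  have hI1 : (∫ t in Ioi (0:ℝ), ((K₀ + h) * (c - p * xb t)) * Real.exp (-κ * t))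
      ≤ ((K₀ + h) * (-α - r * κ)) * κ⁻¹ := by
    have hle : ∀ t ∈ Ioi (0:ℝ), ((K₀ + h) * (c - p * xb t)) * Real.exp (-κ * t)
        ≤ ((K₀ + h) * (-α - r * κ)) * Real.exp (-κ * t) := by
      intro t ht
      have h1 := hcs (xb t) (hxb t (le_of_lt ht))
      have h2 : (0:ℝ) < Real.exp (-κ * t) := Real.exp_pos _
      have h3 : c - p * xb t ≤ -α - r * κ := by linarith
      have : (K₀ + h) * (c - p * xb t) ≤ (K₀ + h) * (-α - r * κ) :=
        mul_le_mul_of_nonneg_left h3 (by linarith)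
      exact mul_le_mul_of_nonneg_right this h2.le
    calc (∫ t in Ioi (0:ℝ), ((K₀ + h) * (c - p * xb t)) * Real.exp (-κ * t))
        ≤ ∫ t in Ioi (0:ℝ), ((K₀ + h) * (-α - r * κ)) * Real.exp (-κ * t) :=
          setIntegral_mono_on hint1 (hcexp.const_mul _) measurableSet_Ioi hle
      _ = ((K₀ + h) * (-α - r * κ)) * κ⁻¹ := by
          rw [integral_const_mul, exp_kappa_integral hκ]
  -- lower bound for second integral
  have hI2 : (K₀ * (-(p * xbar))) * κ⁻¹
      ≤ (∫ t in Ioi (0:ℝ), (K₀ * (c - p * x t)) * Real.exp (-κ * t)) := by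
    have hle : ∀ t ∈ Ioi (0:ℝ), (K₀ * (-(p * xbar))) * Real.exp (-κ * t)
        ≤ (K₀ * (c - p * x t)) * Real.exp (-κ * t) := by
      intro t ht
      obtain ⟨h1, h2⟩ := hx t (le_of_lt ht)
      have h3 : (0:ℝ) < Real.exp (-κ * t) := Real.exp_pos _
      have hinner : -(p * xbar) ≤ c - p * x t := by
        have := mul_le_mul_of_nonneg_left h2 hp
        linarith
      have : K₀ * (-(p * xbar)) ≤ K₀ * (c - p * x t) :=
        mul_le_mul_of_nonneg_left hinner hK₀.le
      exact mul_le_mul_of_nonneg_right this h3.le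
    calc (K₀ * (-(p * xbar))) * κ⁻¹
        = ∫ t in Ioi (0:ℝ), (K₀ * (-(p * xbar))) * Real.exp (-κ * t) := by
          rw [integral_const_mul, exp_kappa_integral hκ]
      _ ≤ _ := setIntegral_mono_on (hcexp.const_mul _) hint2 measurableSet_Ioi hle
  rw [hre xb (K₀ + h), hre x K₀]
  have key : r * h + (∫ t in Ioi (0:ℝ), ((K₀ + h) * (c - p * xb t)) * Real.exp (-κ * t))
      - (∫ t in Ioi (0:ℝ), (K₀ * (c - p * x t)) * Real.exp (-κ * t))
      ≤ κ⁻¹ * (-(h * α) + K₀ * p * xbar) := by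
    have hfinal : r * h + ((K₀ + h) * (-α - r * κ)) * κ⁻¹ - (K₀ * (-(p * xbar))) * κ⁻¹
        ≤ κ⁻¹ * (-(h * α) + K₀ * p * xbar) := by
      have hκinv : κ⁻¹ * κ = 1 := inv_mul_cancel₀ hκ.ne'
      have : (r * h + ((K₀ + h) * (-α - r * κ)) * κ⁻¹ - (K₀ * (-(p * xbar))) * κ⁻¹) * κ
          ≤ (κ⁻¹ * (-(h * α) + K₀ * p * xbar)) * κ := by
        have e1 : (r * h + ((K₀ + h) * (-α - r * κ)) * κ⁻¹ - (K₀ * (-(p * xbar))) * κ⁻¹) * κ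
            = r * h * κ + ((K₀ + h) * (-α - r * κ)) * (κ⁻¹ * κ)
              + (K₀ * (p * xbar)) * (κ⁻¹ * κ) := by ring
        have e2 : (κ⁻¹ * (-(h * α) + K₀ * p * xbar)) * κ
            = (-(h * α) + K₀ * p * xbar) * (κ⁻¹ * κ) := by ring
        rw [e1, e2, hκinv]
        nlinarith [mul_pos hK₀ hα, mul_nonneg (mul_nonneg hK₀.le hr) hκ.le]
      exact le_of_mul_le_mul_right this hκ
    linarith
  refine ⟨key, ?_⟩
  intro n hn hpn
  have : κ⁻¹ * (-(h * α) + K₀ * p * xbar) < 0 := by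
    apply mul_neg_of_pos_of_neg (inv_pos.mpr hκ)
    rw [hn]; nlinarith
  linarith
end

section
/- Consider the adjoint equation λ' = (λ - r)κ - z u(t) + r' with κ > 0, r' = rκ, 0 ≤ u ≤ 1. If λ(τ) = r, λ'(τ) = 0 and u(τ) = 1 (forced by z(τ) = r' > 0), then z(τ) = r'. Moreover if additionally z'(τ) < 0 then λ''(τ) = -z'(τ) u(τ) > 0, contradicting the constraint λ(t) ≤ r near τ. -/
open Set

/-- For the adjoint equation `λ' = (λ - r) κ - z u + r'` with `κ > 0`, `r' = r κ`: if at
`τ > 0` one has `λ τ = r`, `λ' τ = 0` and `u ≡ 1` near `τ`, then `z τ = r'`; moreover if in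
addition `z' τ < 0`, then `λ'' τ = -z' τ > 0` and the constraint `λ t ≤ r` for all `t ≥ 0`
cannot hold. -/
theorem second_order_exclusion (z lam u : ℝ → ℝ) (κ r r' τ : ℝ)
    (hκ : 0 < κ) (hr' : r' = r * κ) (hr'pos : 0 < r') (hτ : 0 < τ)
    (hu : ∀ t, 0 ≤ t → u t ∈ Icc (0:ℝ) 1)
    (hunear : ∃ ε > 0, ∀ t ∈ Ioo (τ - ε) (τ + ε), u t = 1)
    (hzC1 : ContDiff ℝ 1 z) (hlamC2 : ContDiff ℝ 2 lam)
    (hode : ∀ t, 0 ≤ t → deriv lam t = (lam t - r) * κ - z t * u t + r')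
    (hlamτ : lam τ = r) (hlam'τ : deriv lam τ = 0) (huτ : u τ = 1) :
    z τ = r' ∧
      (deriv z τ < 0 →
        deriv (deriv lam) τ = -deriv z τ ∧ 0 < deriv (deriv lam) τ ∧
          ¬ ∀ t, 0 ≤ t → lam t ≤ r) := by
  have hzτ : z τ = r' := by
    have h := hode τ hτ.le
    rw [hlam'τ, hlamτ, huτ] at h
    linarith
  refine ⟨hzτ, fun hz' => ?_⟩
  obtain ⟨ε, hε, hε1⟩ := hunear
  set ε' : ℝ := min ε τ with hε'def
  have hε'pos : 0 < ε' := lt_min hε hτ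
  have hmem : ∀ t ∈ Ioo (τ - ε') (τ + ε'),
      deriv lam t = (lam t - r) * κ - z t + r' := by
    intro t ht
    have ht0 : 0 ≤ t := by
      have : τ - τ ≤ τ - ε' := by
        have := min_le_right ε τ; linarith
      have := ht.1; linarith
    have hu1 : u t = 1 := by
      apply hε1
      constructor
      · have := min_le_left ε τ; have := ht.1; linarith
      · have := min_le_left ε τ; have := ht.2; linarith
    rw [hode t ht0, hu1, mul_one]
  have hτmem : τ ∈ Ioo (τ - ε') (τ + ε') := by
    constructor <;> linarith
  have hldiff : DifferentiableAt ℝ lam τ :=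
    (hlamC2.differentiable two_ne_zero).differentiableAt
  have hzdiff : DifferentiableAt ℝ z τ :=
    (hzC1.differentiable one_ne_zero).differentiableAt
  have hEq : (deriv lam) =ᶠ[nhds τ] (fun t => (lam t - r) * κ - z t + r') := by
    filter_upwards [Ioo_mem_nhds hτmem.1 hτmem.2] with t ht using hmem t ht
  have hda : HasDerivAt (fun t => (lam t - r) * κ - z t + r')
      (deriv lam τ * κ - deriv z τ) τ := by
    exact (((hldiff.hasDerivAt.sub_const r).mul_const κ).sub
      hzdiff.hasDerivAt).add_const r'
  have hsecond : deriv (deriv lam) τ = -deriv z τ := by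
    rw [hEq.deriv_eq, hda.deriv, hlam'τ]
    ring
  have hpos : 0 < deriv (deriv lam) τ := by rw [hsecond]; linarith
  refine ⟨hsecond, hpos, fun H => ?_⟩
  -- deriv lam has positive derivative at τ, deriv lam τ = 0, so deriv lam > 0 just right of τ
  have hgd : HasDerivAt (deriv lam) (deriv (deriv lam) τ) τ := by
    have : DifferentiableAt ℝ (deriv lam) τ :=
      ((hlamC2.iterate_deriv' 1 1).differentiable one_ne_zero).differentiableAt
    exact this.hasDerivAt
  have hslope : Filter.Tendsto (slope (deriv lam) τ) (nhdsWithin τ {τ}ᶜ)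
      (nhds (deriv (deriv lam) τ)) := hasDerivAt_iff_tendsto_slope.mp hgd
  have hslope' : Filter.Tendsto (slope (deriv lam) τ) (nhdsWithin τ (Ioi τ))
      (nhds (deriv (deriv lam) τ)) :=
    hslope.mono_left (nhdsWithin_mono τ (fun x hx => ne_of_gt hx))
  have hev : ∀ᶠ t in nhdsWithin τ (Ioi τ), 0 < slope (deriv lam) τ t :=
    hslope' (Ioi_mem_nhds hpos)
  have hev2 : ∀ᶠ t in nhdsWithin τ (Ioi τ), 0 < deriv lam t := by
    filter_upwards [hev, self_mem_nhdsWithin] with t h1 h2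
    have hd : 0 < t - τ := sub_pos.mpr h2
    have := mul_pos h1 hd
    rw [slope_def_field] at this
    have h3 : deriv lam t - deriv lam τ > 0 := by
      have hne : t - τ ≠ 0 := ne_of_gt hd
      calc (0:ℝ) < (deriv lam t - deriv lam τ) / (t - τ) * (t - τ) := this
        _ = deriv lam t - deriv lam τ := div_mul_cancel₀ _ hne
    linarith [hlam'τ]
  obtain ⟨b, hb, hIoo⟩ := (mem_nhdsGT_iff_exists_Ioo_subset).mp hev2
  have hbτ : τ < b := hb
  set c : ℝ := (τ + b) / 2 with hc
  have hτc : τ < c := by simp only [hc]; linarith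
  have hcb : c < b := by simp only [hc]; linarith
  have hmono : StrictMonoOn lam (Icc τ c) := by
    apply strictMonoOn_of_deriv_pos (convex_Icc τ c)
      ((hlamC2.continuous).continuousOn)
    intro x hx
    rw [interior_Icc] at hx
    exact hIoo ⟨hx.1, hx.2.trans hcb⟩
  have hlt : lam τ < lam c :=
    hmono (left_mem_Icc.mpr hτc.le) (right_mem_Icc.mpr hτc.le) hτc
  have := H c (by linarith)
  rw [hlamτ] at hlt
  linarith
end
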